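/- Let M : ℝ → ℝ be even and differentiable on ℝ with |M'(ξ)| ≤ C₀ (1+ξ²)^{β/2} for all ξ, where β < 1, suppose M is twice differentiable on some interval (-ξ₁, ξ₁) (ξ₁ > 0) with M'' bounded there, M''(0) < 0, and inf_{ξ∈ℝ} ( M(ξ) + M(0) ) > 0. For ε ∈ ℝ set ω_ε = M(0) - (1/2) M''(0) ε². Then there exists C > 0 such that for every real ε with 0 < |ε| ≤ 1 and every ξ ∈ ℝ, | 1/( ω_ε + M(εξ) ) - 1/( 2 M(0) ) | ≤ C |ε|^{(3-2β)/(2-β)} (1 + ξ²). -/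

import Mathlib

open MeasureTheory Filter Topology Set

/-- Corollary 3.5: approximation of the resolvent symbol `1/(ω_ε + M(εξ))` by `1/(2M(0))`,
where `ω_ε = M(0) - (1/2) M''(0) ε²`. -/
theorem resolvent_symbol_approximation (M : ℝ → ℝ) (β ξ₁ C₀ : ℝ)
    (hβ : β < 1) (hξ₁ : ξ₁ > 0) (hC₀ : C₀ > 0)
    (heven : ∀ ξ : ℝ, M (-ξ) = M ξ)
    (hdiff : Differentiable ℝ M)
    (hder : ∀ ξ : ℝ, |deriv M ξ| ≤ C₀ * (1 + ξ ^ 2) ^ (β / 2))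
    (hdiff2 : ∀ ξ ∈ Ioo (-ξ₁) ξ₁, DifferentiableAt ℝ (deriv M) ξ)
    (hbdd2 : ∃ B : ℝ, ∀ ξ ∈ Ioo (-ξ₁) ξ₁, |deriv (deriv M) ξ| ≤ B)
    (hM''0 : deriv (deriv M) 0 < 0)
    (hinf : ∃ m₃ > 0, ∀ ξ : ℝ, m₃ ≤ M ξ + M 0) :
    ∃ C > 0, ∀ ε : ℝ, 0 < |ε| → |ε| ≤ 1 → ∀ ξ : ℝ,
      |1 / ((M 0 - (1/2) * deriv (deriv M) 0 * ε ^ 2) + M (ε * ξ)) - 1 / (2 * M 0)|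
        ≤ C * |ε| ^ ((3 - 2 * β) / (2 - β)) * (1 + ξ ^ 2) := by
  obtain ⟨B, hB⟩ := hbdd2
  obtain ⟨m₃, hm₃, hm⟩ := hinf
  have hB0 : 0 ≤ B := le_trans (abs_nonneg _) (hB 0 ⟨by linarith, hξ₁⟩)
  -- M'(0) = 0
  have hMd0 : deriv M 0 = 0 := by
    have h := deriv_comp_neg M 0
    simp only [heven, neg_zero] at h
    linarith
  -- key quadratic bound
  set K : ℝ := max B (C₀ * Real.sqrt (4 / ξ₁ ^ 2 + 1)) with hK
  have hK0 : 0 ≤ K := le_trans hB0 (le_max_left _ _)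
  have key : ∀ η : ℝ, |M η - M 0| ≤ K * η ^ 2 := by
    intro η
    have hmem0 : (0 : ℝ) ∈ Icc (-|η|) |η| := ⟨neg_nonpos.2 (abs_nonneg η), abs_nonneg η⟩
    have hmemη : η ∈ Icc (-|η|) |η| := ⟨neg_abs_le η, le_abs_self η⟩
    have hderM : ∀ x ∈ Icc (-|η|) |η|, HasDerivWithinAt M (deriv M x) (Icc (-|η|) |η|) x :=
      fun x _ => (hdiff x).hasDerivAt.hasDerivWithinAt
    rcases le_or_gt |η| (ξ₁ / 2) with hsm | hlg
    · -- small case: |η| ≤ ξ₁/2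
      have hsub : Icc (-(ξ₁/2)) (ξ₁/2) ⊆ Ioo (-ξ₁) ξ₁ := fun x hx =>
        ⟨by cases hx with | intro h1 h2 => linarith, by cases hx with | intro h1 h2 => linarith⟩
      have hsub2 : Icc (-|η|) |η| ⊆ Icc (-(ξ₁/2)) (ξ₁/2) := fun x hx =>
        ⟨by cases hx with | intro h1 h2 => linarith, by cases hx with | intro h1 h2 => linarith⟩
      -- |M'(x)| ≤ B |η| on the segment
      have hM'b : ∀ x ∈ Icc (-|η|) |η|, ‖deriv M x‖ ≤ B * |η| := by
        intro x hx
        have h0 : (0:ℝ) ∈ Icc (-(ξ₁/2)) (ξ₁/2) := ⟨by linarith, by linarith⟩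
        have h1 : ‖deriv M x - deriv M 0‖ ≤ B * ‖x - 0‖ :=
          Convex.norm_image_sub_le_of_norm_hasDerivWithin_le
            (fun y hy => ((hdiff2 y (hsub hy)).hasDerivAt).hasDerivWithinAt)
            (fun y hy => hB y (hsub hy)) (convex_Icc _ _) h0 (hsub2 hx)
        rw [hMd0, sub_zero, sub_zero] at h1
        refine h1.trans ?_
        have : ‖x‖ ≤ |η| := by
          rw [Real.norm_eq_abs, abs_le]; exact hx
        exact mul_le_mul_of_nonneg_left this hB0
      have h2 : ‖M η - M 0‖ ≤ (B * |η|) * ‖η - 0‖ :=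
        Convex.norm_image_sub_le_of_norm_hasDerivWithin_le hderM hM'b
          (convex_Icc _ _) hmem0 hmemη
      rw [sub_zero, Real.norm_eq_abs, Real.norm_eq_abs] at h2
      calc |M η - M 0| ≤ B * |η| * |η| := h2
        _ = B * η ^ 2 := by rw [mul_assoc, abs_mul_abs_self]; ring
        _ ≤ K * η ^ 2 := by
            exact mul_le_mul_of_nonneg_right (le_max_left _ _) (sq_nonneg η)
    · -- large case: |η| > ξ₁/2
      have hη1 : 1 ≤ 4 / ξ₁ ^ 2 * η ^ 2 := by
        have h1 : (ξ₁/2) ^ 2 ≤ η ^ 2 := by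
          have := sq_abs η
          nlinarith [abs_nonneg η]
        rw [div_mul_eq_mul_div, le_div_iff₀ (by positivity)]
        nlinarith
      have hM'b : ∀ x ∈ Icc (-|η|) |η|, ‖deriv M x‖ ≤ C₀ * Real.sqrt (1 + η ^ 2) := by
        intro x hx
        rw [Real.norm_eq_abs]
        refine (hder x).trans ?_
        have hx2 : x ^ 2 ≤ η ^ 2 := by
          have h1 : |x| ≤ |η| := by rw [abs_le]; exact hx
          calc x ^ 2 = |x| ^ 2 := (sq_abs x).symm
            _ ≤ |η| ^ 2 := by nlinarith [abs_nonneg x]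
            _ = η ^ 2 := sq_abs η
        have h1 : (1 + x ^ 2 : ℝ) ^ (β / 2) ≤ (1 + x ^ 2 : ℝ) ^ ((1:ℝ)/2) :=
          Real.rpow_le_rpow_of_exponent_le (by nlinarith [sq_nonneg x]) (by linarith)
        have h2 : (1 + x ^ 2 : ℝ) ^ ((1:ℝ)/2) ≤ (1 + η ^ 2 : ℝ) ^ ((1:ℝ)/2) :=
          Real.rpow_le_rpow (by positivity) (by linarith) (by norm_num)
        have h3 : (1 + η ^ 2 : ℝ) ^ ((1:ℝ)/2) = Real.sqrt (1 + η ^ 2) := by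
          rw [Real.sqrt_eq_rpow]
        have := h1.trans h2
        rw [h3] at this
        exact mul_le_mul_of_nonneg_left this (le_of_lt hC₀)
      have h2 : ‖M η - M 0‖ ≤ (C₀ * Real.sqrt (1 + η ^ 2)) * ‖η - 0‖ :=
        Convex.norm_image_sub_le_of_norm_hasDerivWithin_le hderM hM'b
          (convex_Icc _ _) hmem0 hmemη
      rw [sub_zero, Real.norm_eq_abs, Real.norm_eq_abs] at h2
      have hsq : Real.sqrt (1 + η ^ 2) ≤ Real.sqrt (4 / ξ₁ ^ 2 + 1) * |η| := by
        have h4 : (1 + η ^ 2 : ℝ) ≤ (4 / ξ₁ ^ 2 + 1) * η ^ 2 := by nlinarith [sq_nonneg η]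
        calc Real.sqrt (1 + η ^ 2) ≤ Real.sqrt ((4 / ξ₁ ^ 2 + 1) * η ^ 2) :=
              Real.sqrt_le_sqrt h4
          _ = Real.sqrt (4 / ξ₁ ^ 2 + 1) * Real.sqrt (η ^ 2) :=
              Real.sqrt_mul (by positivity) _
          _ = Real.sqrt (4 / ξ₁ ^ 2 + 1) * |η| := by rw [Real.sqrt_sq_eq_abs]
      calc |M η - M 0| ≤ C₀ * Real.sqrt (1 + η ^ 2) * |η| := h2
        _ ≤ C₀ * (Real.sqrt (4 / ξ₁ ^ 2 + 1) * |η|) * |η| := by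
            apply mul_le_mul_of_nonneg_right _ (abs_nonneg η)
            exact mul_le_mul_of_nonneg_left hsq (le_of_lt hC₀)
        _ = (C₀ * Real.sqrt (4 / ξ₁ ^ 2 + 1)) * η ^ 2 := by
            rw [mul_assoc, mul_assoc, abs_mul_abs_self]; ring
        _ ≤ K * η ^ 2 := mul_le_mul_of_nonneg_right (le_max_right _ _) (sq_nonneg η)
  -- assemble
  set c : ℝ := -(1/2) * deriv (deriv M) 0 with hc
  have hc0 : 0 < c := by rw [hc]; linarith
  refine ⟨(K + c) / m₃ ^ 2, by positivity, ?_⟩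
  intro ε hε hε1 ξ
  set α : ℝ := (3 - 2 * β) / (2 - β) with hα
  have hεα : ε ^ 2 ≤ |ε| ^ α := by
    have hα2 : α ≤ 2 := by
      rw [hα, div_le_iff₀ (by linarith)]; linarith
    have h1 : |ε| ^ (2:ℝ) ≤ |ε| ^ α := Real.rpow_le_rpow_of_exponent_ge hε hε1 hα2
    calc ε ^ 2 = |ε| ^ 2 := (sq_abs ε).symm
      _ = |ε| ^ ((2:ℕ):ℝ) := (Real.rpow_natCast _ 2).symm
      _ ≤ |ε| ^ α := by norm_num at h1 ⊢; exact h1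
  set D : ℝ := (M 0 - (1/2) * deriv (deriv M) 0 * ε ^ 2) + M (ε * ξ) with hD
  have hDm : m₃ ≤ D := by
    have h1 := hm (ε * ξ)
    have h2 : 0 ≤ c * ε ^ 2 := by positivity
    rw [hD]; rw [hc] at h2; nlinarith
  have h2M0 : m₃ ≤ 2 * M 0 := by have := hm 0; linarith
  have hDpos : 0 < D := lt_of_lt_of_le hm₃ hDm
  have h2M0pos : 0 < 2 * M 0 := lt_of_lt_of_le hm₃ h2M0
  have hnum : |2 * M 0 - D| ≤ (K + c) * ε ^ 2 * (1 + ξ ^ 2) := by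
    have h1 : 2 * M 0 - D = (M 0 - M (ε * ξ)) + (1/2) * deriv (deriv M) 0 * ε ^ 2 := by
      rw [hD]; ring
    have h2 : |M (ε * ξ) - M 0| ≤ K * (ε * ξ) ^ 2 := key (ε * ξ)
    have h3 : |2 * M 0 - D| ≤ |M (ε * ξ) - M 0| + c * ε ^ 2 := by
      rw [h1]
      refine (abs_add_le _ _).trans ?_
      rw [abs_sub_comm]
      have : |(1:ℝ)/2 * deriv (deriv M) 0 * ε ^ 2| = c * ε ^ 2 := by
        rw [abs_mul, abs_mul]
        rw [abs_of_nonpos (le_of_lt hM''0), abs_of_nonneg (sq_nonneg ε), hc]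
        norm_num
      rw [this]
    refine h3.trans ?_
    have h4 : K * (ε * ξ) ^ 2 = K * ε ^ 2 * ξ ^ 2 := by ring
    nlinarith [sq_nonneg ε, sq_nonneg ξ, mul_nonneg hK0 (sq_nonneg (ε * ξ))]
  have heq : 1 / D - 1 / (2 * M 0) = (2 * M 0 - D) / (D * (2 * M 0)) := by
    rw [div_sub_div _ _ hDpos.ne' h2M0pos.ne']; ring
  rw [heq, abs_div, abs_of_pos (mul_pos hDpos h2M0pos)]
  have hden : m₃ ^ 2 ≤ D * (2 * M 0) := by
    rw [sq]; exact mul_le_mul hDm h2M0 hm₃.le hDpos.le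
  calc |2 * M 0 - D| / (D * (2 * M 0)) ≤ |2 * M 0 - D| / m₃ ^ 2 := by
        gcongr
    _ ≤ (K + c) * ε ^ 2 * (1 + ξ ^ 2) / m₃ ^ 2 := by gcongr
    _ ≤ (K + c) / m₃ ^ 2 * |ε| ^ α * (1 + ξ ^ 2) := by
        rw [div_mul_eq_mul_div, div_mul_eq_mul_div, mul_div_assoc, mul_div_assoc]
        gcongr
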